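/- Let G be a finite simple graph on n vertices. The hairing H(G) is antipalindromic if and only if H(G) is bipartite and n is odd. -/

import Mathlib

open Polynomial

/-- The characteristic polynomial (of the adjacency matrix) of a finite simple graph. -/
noncomputable def charPoly {V : Type*} [Finite V] (G : SimpleGraph V) : Polynomial ℤ :=
  letI := Fintype.ofFinite V
  letI := Classical.decEq V
  letI := Classical.decRel G.Adj
  (SimpleGraph.adjMatrix ℤ G).charpoly

/-- `G` is antipalindromic: writing `χ_G(λ) = Σ a_i λ^(n-i)`, we have `a_i = -a_(n-i)`. -/
def IsAntipalindromic {V : Type*} [Finite V] (G : SimpleGraph V) : Prop :=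
  ∀ i ≤ Nat.card V, (charPoly G).coeff i = -(charPoly G).coeff (Nat.card V - i)

/-- The hairing of `G`: attach a pendant vertex to every vertex of `G`.
Vertices `(u, false)` form the original graph and `(u, true)` is the pendant at `u`. -/
def hairing {V : Type*} (G : SimpleGraph V) : SimpleGraph (V × Bool) where
  Adj a b := (a.2 = false ∧ b.2 = false ∧ G.Adj a.1 b.1) ∨ (a.1 = b.1 ∧ a.2 ≠ b.2)
  symm := by
    constructor
    rintro a b (⟨ha, hb, hadj⟩ | ⟨h1, h2⟩)
    · exact Or.inl ⟨hb, ha, hadj.symm⟩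
    · exact Or.inr ⟨h1.symm, h2.symm⟩
  loopless := by
    constructor
    rintro a (⟨_, _, hadj⟩ | ⟨_, h⟩)
    · exact (G.ne_of_adj hadj) rfl
    · exact h rfl

/-! ### Auxiliary general lemmas -/

section GeneralMatrix

open Matrix

variable {R : Type*} [CommRing R] {m : Type*} [Fintype m] [DecidableEq m]

lemma my_eval_charpoly (M : Matrix m m R) (y : R) :
    M.charpoly.eval y = (Matrix.scalar m y - M).det := by
  rw [Matrix.charpoly, ← Polynomial.coe_evalRingHom, RingHom.map_det]
  congr 1
  ext i j
  by_cases h : i = j <;>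
    simp [charmatrix_apply, Matrix.scalar_apply, diagonal_apply, h, RingHom.mapMatrix_apply,
      Matrix.map_apply]

lemma my_charpoly_comp_neg (M : Matrix m m R) :
    M.charpoly.comp (-X) = (-1) ^ Fintype.card m * (-M).charpoly := by
  let f : R[X] →+* R[X] := ((aeval (-X : R[X])).toRingHom : R[X] →+* R[X])
  have h1 : M.charpoly.comp (-X) = f M.charpoly := rfl
  rw [h1, Matrix.charpoly, RingHom.map_det, Matrix.charpoly, ← Matrix.det_neg]
  congr 1
  ext i j
  by_cases h : i = j <;>
    simp [charmatrix_apply, diagonal_apply, h, RingHom.mapMatrix_apply, Matrix.map_apply, f]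
  ring

lemma my_charpoly_conj (P M : Matrix m m R) (h : P * P = 1) :
    (P * M * P).charpoly = M.charpoly := by
  let f : Matrix m m R →+* Matrix m m R[X] := (C : R →+* R[X]).mapMatrix
  have hc : Commute (Matrix.scalar m (X : R[X])) (f P) :=
    Matrix.scalar_commute _ (fun r' => Commute.all _ _) _
  have h2 : f P * f P = 1 := by rw [← f.map_mul, h, f.map_one]
  have key : charmatrix (P * M * P) = f P * charmatrix M * f P := by
    rw [charmatrix, charmatrix, mul_sub, sub_mul]
    congr 1
    · rw [← hc.eq, Matrix.mul_assoc, h2, Matrix.mul_one]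
    · show C.mapMatrix (P * M * P) = f P * f M * f P
      rw [f.map_mul, f.map_mul]
  have hdet : (f P).det * (f P).det = 1 := by
    rw [← Matrix.det_mul, h2, Matrix.det_one]
  rw [Matrix.charpoly, Matrix.charpoly, key, Matrix.det_mul, Matrix.det_mul]
  linear_combination (charmatrix M).det * hdet

end GeneralMatrix

section Hermitian

open Matrix

variable {m : Type*} [Fintype m] [DecidableEq m]

lemma herm_charpoly {A : Matrix m m ℂ} (hA : A.IsHermitian) :
    A.charpoly = ∏ i, (X - C ((hA.eigenvalues i : ℝ) : ℂ)) := by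
  have hsp := hA.spectral_theorem
  set U : Matrix m m ℂ := (hA.eigenvectorUnitary : Matrix m m ℂ) with hU
  have h1 : U * star U = 1 := Matrix.mem_unitaryGroup_iff.mp hA.eigenvectorUnitary.2
  have h2 : star U * U = 1 := Matrix.mem_unitaryGroup_iff'.mp hA.eigenvectorUnitary.2
  have hdet : U.det * (star U).det = 1 := by rw [← Matrix.det_mul, h1, Matrix.det_one]
  have key : A.charpoly = (diagonal (RCLike.ofReal ∘ hA.eigenvalues) : Matrix m m ℂ).charpoly := by
    conv_lhs => rw [hsp]
    set D := (diagonal (RCLike.ofReal ∘ hA.eigenvalues) : Matrix m m ℂ)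
    let f : Matrix m m ℂ →+* Matrix m m (Polynomial ℂ) := (C : ℂ →+* Polynomial ℂ).mapMatrix
    have hcU : Commute (Matrix.scalar m (X : Polynomial ℂ)) (f U) :=
      Matrix.scalar_commute _ (fun r' => Commute.all _ _) _
    have key2 : charmatrix (U * D * star U) = f U * charmatrix D * f (star U) := by
      rw [charmatrix, charmatrix, mul_sub, sub_mul]
      congr 1
      · rw [← hcU.eq, Matrix.mul_assoc, ← f.map_mul, h1, f.map_one, Matrix.mul_one]
      · show C.mapMatrix (U * D * star U) = f U * f D * f (star U)
        rw [f.map_mul, f.map_mul]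
    simp only [Unitary.conjStarAlgAut_apply, ← hU]
    rw [Matrix.charpoly, Matrix.charpoly, key2, Matrix.det_mul, Matrix.det_mul]
    have : (f U).det * (f (star U)).det = 1 := by
      rw [← Matrix.det_mul, ← f.map_mul, h1, f.map_one, Matrix.det_one]
    linear_combination (charmatrix (diagonal (RCLike.ofReal ∘ hA.eigenvalues))).det * this
  rw [key, Matrix.charpoly]
  have : charmatrix (diagonal (RCLike.ofReal ∘ hA.eigenvalues) : Matrix m m ℂ) =
      diagonal (fun i => (X : Polynomial ℂ) - C ((hA.eigenvalues i : ℝ) : ℂ)) := by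
    ext i j
    by_cases h : i = j <;>
      simp [charmatrix_apply, diagonal_apply, h, RingHom.mapMatrix_apply, Matrix.map_apply]
  rw [this, Matrix.det_diagonal]

lemma herm_trace_pow {A : Matrix m m ℂ} (hA : A.IsHermitian) (k : ℕ) :
    (A ^ k).trace = ∑ i, ((hA.eigenvalues i : ℝ) : ℂ) ^ k := by
  have hsp := hA.spectral_theorem
  set U : Matrix m m ℂ := (hA.eigenvectorUnitary : Matrix m m ℂ) with hU
  have h1 : U * star U = 1 := Matrix.mem_unitaryGroup_iff.mp hA.eigenvectorUnitary.2
  have h2 : star U * U = 1 := Matrix.mem_unitaryGroup_iff'.mp hA.eigenvectorUnitary.2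
  set D := (diagonal (RCLike.ofReal ∘ hA.eigenvalues) : Matrix m m ℂ) with hD
  have hpow : ∀ k : ℕ, A ^ k = U * D ^ k * star U := by
    intro k
    induction k with
    | zero => simp [pow_zero, h1]
    | succ k ih =>
      rw [pow_succ, ih, hsp, pow_succ]
      calc U * D ^ k * star U * (U * D * star U)
          = U * D ^ k * (star U * U) * D * star U := by noncomm_ring
        _ = U * (D ^ k * D) * star U := by rw [h2]; noncomm_ring
  rw [hpow k, Matrix.trace_mul_comm, ← Matrix.mul_assoc, h2, Matrix.one_mul, hD,
    Matrix.diagonal_pow, Matrix.trace_diagonal]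
  simp [Function.comp]

lemma herm_trace_pow_eq {A B : Matrix m m ℂ} (hA : A.IsHermitian) (hB : B.IsHermitian)
    (h : A.charpoly = B.charpoly) (k : ℕ) : (A ^ k).trace = (B ^ k).trace := by
  have hroots : (Finset.univ.val.map fun i => ((hA.eigenvalues i : ℝ) : ℂ)) =
      (Finset.univ.val.map fun i => ((hB.eigenvalues i : ℝ) : ℂ)) := by
    have h1 := herm_charpoly hA
    have h2 := herm_charpoly hB
    have e1 : A.charpoly.roots = Finset.univ.val.map fun i => ((hA.eigenvalues i : ℝ) : ℂ) := by
      rw [h1, ← Polynomial.roots_multiset_prod_X_sub_C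
        (Finset.univ.val.map fun i => ((hA.eigenvalues i : ℝ) : ℂ))]
      rw [Multiset.map_map, Finset.prod_eq_multiset_prod]
      rfl
    have e2 : B.charpoly.roots = Finset.univ.val.map fun i => ((hB.eigenvalues i : ℝ) : ℂ) := by
      rw [h2, ← Polynomial.roots_multiset_prod_X_sub_C
        (Finset.univ.val.map fun i => ((hB.eigenvalues i : ℝ) : ℂ))]
      rw [Multiset.map_map, Finset.prod_eq_multiset_prod]
      rfl
    rw [← e1, ← e2, h]
  rw [herm_trace_pow hA k, herm_trace_pow hB k]
  have h3 := congrArg (fun s => (s.map fun z : ℂ => z ^ k).sum) hroots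
  simp only [Multiset.map_map, Function.comp] at h3
  rw [Finset.sum, Finset.sum]
  convert h3 using 2

end Hermitian

section GraphColoring

open SimpleGraph

noncomputable def repOf {V : Type*} (G : SimpleGraph V) (v : V) : V :=
  (G.connectedComponentMk v).out

lemma reachable_repOf {V : Type*} (G : SimpleGraph V) (v : V) : G.Reachable (repOf G v) v := by
  have : G.connectedComponentMk (repOf G v) = G.connectedComponentMk v :=
    (G.connectedComponentMk v).out_eq
  exact (SimpleGraph.ConnectedComponent.eq.mp this)

lemma colorable_two_of_no_odd_walks {V : Type*} {G : SimpleGraph V}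
    (h : ∀ (u : V) (p : G.Walk u u), ¬ Odd p.length) : G.Colorable 2 := by
  classical
  let w : ∀ v : V, G.Walk (repOf G v) v := fun v => (reachable_repOf G v).some
  let c : V → Bool := fun v => decide (Odd (w v).length)
  have valid : ∀ {u v : V}, G.Adj u v → c u ≠ c v := by
    intro u v hadj hc
    have hrep : repOf G u = repOf G v := by
      unfold repOf
      rw [SimpleGraph.ConnectedComponent.eq.mpr hadj.reachable]
    let p : G.Walk (repOf G u) (repOf G u) :=
      ((w u).append (SimpleGraph.Walk.cons hadj ((w v).reverse.copy rfl hrep.symm)))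
    have hlen : p.length = (w u).length + (1 + (w v).length) := by
      simp [p, SimpleGraph.Walk.length_append, SimpleGraph.Walk.length_cons,
        SimpleGraph.Walk.length_copy, SimpleGraph.Walk.length_reverse]
      omega
    have hpar : Odd p.length := by
      rw [hlen]
      have hpq : Odd ((w u).length) ↔ Odd ((w v).length) := by
        simpa [c, decide_eq_decide] using hc
      rw [Nat.odd_iff] at hpq ⊢
      have h2 : (w u).length % 2 = (w v).length % 2 := by
        rcases Nat.mod_two_eq_zero_or_one (w u).length with h' | h' <;>
          rcases Nat.mod_two_eq_zero_or_one (w v).length with h'' | h'' <;>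
          simp [h', h'', Nat.even_iff, Nat.odd_iff] at hpq ⊢ <;> omega
      omega
    exact h _ p hpar
  exact (SimpleGraph.Coloring.mk c valid).colorable.mono_left (by rfl) |>.mono (by simp)

end GraphColoring

section AdjacencySpectral

open SimpleGraph Matrix

variable {V : Type*} [Fintype V] [DecidableEq V] {G : SimpleGraph V} [DecidableRel G.Adj]

lemma charpoly_neg_of_colorable (hcol : G.Colorable 2) :
    (-(G.adjMatrix ℤ)).charpoly = (G.adjMatrix ℤ).charpoly := by
  obtain ⟨c⟩ := hcol
  let d : V → ℤ := fun v => if c v = 0 then 1 else -1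
  have h2 : ∀ a b : Fin 2, a ≠ b →
      (if a = 0 then (1:ℤ) else -1) * (if b = 0 then 1 else -1) = -1 := by decide
  have hd : ∀ v, d v * d v = 1 := by
    intro v; by_cases h : c v = 0 <;> simp [d, h]
  let D : Matrix V V ℤ := Matrix.diagonal d
  have hDD : D * D = 1 := by
    rw [Matrix.diagonal_mul_diagonal]
    ext i j
    by_cases h : i = j <;> simp [Matrix.diagonal_apply, h, hd, Matrix.one_apply]
  have hconj : D * G.adjMatrix ℤ * D = -(G.adjMatrix ℤ) := by
    ext u v
    rw [Matrix.neg_apply, Matrix.mul_diagonal, Matrix.diagonal_mul]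
    by_cases h : G.Adj u v
    · have := h2 (c u) (c v) (c.valid h)
      simp only [adjMatrix_apply, if_pos h]
      rw [mul_one]
      exact h2 (c u) (c v) (c.valid h)
    · simp [adjMatrix_apply, h]
  rw [← hconj]
  exact my_charpoly_conj D (G.adjMatrix ℤ) hDD

lemma adjC_eq : G.adjMatrix ℂ = (G.adjMatrix ℤ).map (Int.cast : ℤ → ℂ) := by
  ext u v; by_cases h : G.Adj u v <;> simp [adjMatrix_apply, h, Matrix.map_apply]

lemma adjC_herm : (G.adjMatrix ℂ).IsHermitian := by
  unfold Matrix.IsHermitian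
  ext u v
  have h' : G.Adj v u ↔ G.Adj u v := G.adj_comm v u
  by_cases h : G.Adj u v <;>
    simp [Matrix.conjTranspose_apply, adjMatrix_apply, h, h']

lemma colorable_of_charpoly_neg (h : (-(G.adjMatrix ℤ)).charpoly = (G.adjMatrix ℤ).charpoly) :
    G.Colorable 2 := by
  have hC : (-(G.adjMatrix ℂ)).charpoly = (G.adjMatrix ℂ).charpoly := by
    have h1 : (G.adjMatrix ℂ) = (G.adjMatrix ℤ).map (Int.castRingHom ℂ) := adjC_eq
    have h2 : (-(G.adjMatrix ℂ)) = (-(G.adjMatrix ℤ)).map (Int.castRingHom ℂ) := by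
      rw [adjC_eq]; ext u v; simp [Matrix.map_apply]
    rw [h2, h1, Matrix.charpoly_map, Matrix.charpoly_map, h]
  have htr : ∀ k : ℕ, Odd k → ((G.adjMatrix ℂ) ^ k).trace = 0 := by
    intro k hk
    have := herm_trace_pow_eq (adjC_herm (G := G)).neg (adjC_herm (G := G)) hC k
    rw [neg_pow, hk.neg_one_pow] at this
    simp only [neg_one_mul, Matrix.trace_neg] at this
    linear_combination -this / 2
  apply colorable_two_of_no_odd_walks
  intro u p hodd
  have hcast : ((G.adjMatrix ℕ).map ⇑(Nat.castRingHom ℂ)) = G.adjMatrix ℂ := by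
    ext a b; by_cases h' : G.Adj a b <;> simp [adjMatrix_apply, h', Matrix.map_apply]
  have htrN : ∀ k : ℕ, (((G.adjMatrix ℕ) ^ k).trace : ℂ) = ((G.adjMatrix ℂ) ^ k).trace := by
    intro k
    have := map_pow ((Nat.castRingHom ℂ).mapMatrix) (G.adjMatrix ℕ) k
    simp only [RingHom.mapMatrix_apply] at this
    rw [← hcast, ← this]
    simp [Matrix.trace, Matrix.map_apply, Matrix.diag, Nat.cast_sum]
  have h0 : (((G.adjMatrix ℕ) ^ p.length).trace : ℂ) = 0 := by
    rw [htrN]; exact htr _ hodd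
  have h0' : ((G.adjMatrix ℕ) ^ p.length).trace = 0 := by exact_mod_cast h0
  rw [Matrix.trace] at h0'
  have hu : ((G.adjMatrix ℕ) ^ p.length).diag u = 0 :=
    (Finset.sum_eq_zero_iff.mp h0') u (Finset.mem_univ u)
  rw [Matrix.diag_apply, SimpleGraph.adjMatrix_pow_apply_eq_card_walk] at hu
  have : IsEmpty {q : G.Walk u u | q.length = p.length} := Fintype.card_eq_zero_iff.mp hu
  exact this.elim ⟨p, rfl⟩

end AdjacencySpectral

noncomputable section

abbrev K := FractionRing (Polynomial ℤ)

def φ : Polynomial ℤ →+* K := (algebraMap (Polynomial ℤ) K : _ →+* K)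

def ii : ℤ →+* K := φ.comp (Polynomial.C : ℤ →+* Polynomial ℤ)

def xx : K := φ Polynomial.X

lemma φ_inj : Function.Injective φ := IsFractionRing.injective _ _

lemma φ_eq_eval₂ (p : Polynomial ℤ) : φ p = eval₂ ii xx p := by
  have : (eval₂RingHom ii xx : Polynomial ℤ →+* K) = φ := by
    apply Polynomial.ringHom_ext
    · intro a; simp [ii]
    · simp [xx]
  rw [← this]; rfl

lemma xx_ne_zero : xx ≠ 0 := by
  intro h
  have := φ_inj (a₁ := Polynomial.X) (a₂ := 0) (by simpa [xx] using h)
  exact Polynomial.X_ne_zero this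

instance : Invertible xx := invertibleOfNonzero xx_ne_zero

def zz : K := xx - ⅟xx

lemma zx : zz * xx = xx ^ 2 - 1 := by
  calc zz * xx = xx * xx - ⅟xx * xx := by rw [zz, sub_mul]
    _ = xx ^ 2 - 1 := by rw [invOf_mul_self]; ring

lemma eval₂_zz_inj (r : Polynomial ℤ) (h : eval₂ ii zz r = 0) : r = 0 := by
  by_contra hr
  set d := r.natDegree with hd
  set T : Polynomial ℤ :=
    ∑ j ∈ Finset.range (d+1), Polynomial.C (r.coeff j) * (Polynomial.X^2 - 1)^j *
      Polynomial.X^(d - j) with hT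
  have hmap : φ T = eval₂ ii zz r * xx ^ d := by
    rw [hT, map_sum, eval₂_eq_sum_range' ii (Nat.lt_succ_self d) zz, Finset.sum_mul]
    apply Finset.sum_congr rfl
    intro j hj
    have hj' : j ≤ d := Nat.lt_succ_iff.mp (Finset.mem_range.mp hj)
    have e1 : φ (Polynomial.C (r.coeff j) * (Polynomial.X^2 - 1)^j * Polynomial.X^(d - j))
        = ii (r.coeff j) * (zz * xx)^j * xx^(d-j) := by
      simp only [_root_.map_mul, _root_.map_pow, map_sub, _root_.map_one]
      rw [show φ Polynomial.X = xx from rfl, ← zx]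
      rfl
    rw [e1, mul_pow, mul_assoc, mul_assoc, ← pow_add]
    have h3 : j + (d - j) = d := by omega
    rw [h3]
    ring
  rw [h, zero_mul] at hmap
  have hT0 : T = 0 := φ_inj (by simpa using hmap)
  have hco : T.coeff (d + d) = r.coeff d := by
    rw [hT, Polynomial.finset_sum_coeff]
    rw [Finset.sum_eq_single d]
    · have hm : ((Polynomial.X^2 - 1 : Polynomial ℤ)^d).coeff (2*d) = 1 := by
        have hmon : ((Polynomial.X^2 - Polynomial.C 1 : Polynomial ℤ)).Monic :=
          Polynomial.monic_X_pow_sub_C 1 (by norm_num)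
      
        have hdeg : ((Polynomial.X^2 - Polynomial.C 1 : Polynomial ℤ)^d).natDegree = 2*d := by
          rw [Polynomial.natDegree_pow, Polynomial.natDegree_X_pow_sub_C]; ring
        have := (hmon.pow d).coeff_natDegree
        rw [hdeg] at this
        simpa using this
      simp only [Nat.sub_self, pow_zero, mul_one, Polynomial.coeff_C_mul]
      rw [show d + d = 2*d by ring, hm, mul_one]
    · intro j hj hjd
      have hj' : j ≤ d := Nat.lt_succ_iff.mp (Finset.mem_range.mp hj)
      apply Polynomial.coeff_eq_zero_of_natDegree_lt
      have hB : ((Polynomial.X^2 - 1 : Polynomial ℤ)^j).natDegree ≤ 2*j := by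
        rw [Polynomial.natDegree_pow]
        have h2 : (Polynomial.X^2 - 1 : Polynomial ℤ).natDegree = 2 := by
          simpa using Polynomial.natDegree_X_pow_sub_C (n := 2) (r := (1:ℤ))
        rw [h2]
        omega
      calc (Polynomial.C (r.coeff j) * (Polynomial.X^2 - 1)^j * Polynomial.X^(d-j)).natDegree
          ≤ (Polynomial.C (r.coeff j) * (Polynomial.X^2 - 1)^j).natDegree +
            (Polynomial.X^(d-j) : Polynomial ℤ).natDegree := Polynomial.natDegree_mul_le
        _ ≤ (0 + 2*j) + (d - j) := by
            refine add_le_add (le_trans Polynomial.natDegree_mul_le ?_)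
              (le_of_eq (Polynomial.natDegree_X_pow _))
            rw [Polynomial.natDegree_C, zero_add]
            simpa using hB
        _ < d + d := by omega
    · intro hd'
      exact absurd (Finset.self_mem_range_succ d) hd'
  rw [hT0, Polynomial.coeff_zero] at hco
  exact (Polynomial.leadingCoeff_ne_zero.mpr hr)
    (by rw [Polynomial.leadingCoeff, ← hd]; exact hco.symm)

section HairingBlocks

open Matrix SimpleGraph

variable {V : Type*} [Fintype V] [DecidableEq V] (G : SimpleGraph V) [DecidableRel G.Adj]

instance hairingDecidableAdj : DecidableRel (hairing G).Adj := fun a b =>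
  decidable_of_iff ((a.2 = false ∧ b.2 = false ∧ G.Adj a.1 b.1) ∨ (a.1 = b.1 ∧ a.2 ≠ b.2))
    Iff.rfl

def sumEquiv (V : Type*) : V ⊕ V ≃ V × Bool where
  toFun s := Sum.elim (fun u => (u, false)) (fun u => (u, true)) s
  invFun p := cond p.2 (Sum.inr p.1) (Sum.inl p.1)
  left_inv := by rintro (u | u) <;> rfl
  right_inv := by rintro ⟨u, (_ | _)⟩ <;> rfl

lemma hairing_submatrix (y : K) :
    (Matrix.scalar (V × Bool) y - ((hairing G).adjMatrix ℤ).map ⇑ii).submatrix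
        (sumEquiv V) (sumEquiv V) =
      fromBlocks (Matrix.scalar V y - (G.adjMatrix ℤ).map ⇑ii) (-1) (-1) (Matrix.scalar V y) := by
  ext i j
  rcases i with u | u <;> rcases j with v | v <;>
    by_cases h : u = v <;>
    simp [Matrix.submatrix_apply, sumEquiv, fromBlocks, Matrix.sub_apply, Matrix.scalar_apply,
      Matrix.diagonal_apply, Matrix.map_apply, SimpleGraph.adjMatrix_apply,
      Matrix.one_apply, Prod.ext_iff, h]
  all_goals (by_cases hadj : G.Adj u v <;> simp [hairing, hadj, h])

lemma Edet (y : K) [Invertible y] :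
    eval₂ ii y ((hairing G).adjMatrix ℤ).charpoly =
      y ^ (Fintype.card V) * eval₂ ii (y - ⅟y) ((G.adjMatrix ℤ).charpoly) := by
  letI : Invertible (Matrix.scalar V y) :=
    ⟨Matrix.scalar V ⅟y, by rw [← _root_.map_mul, invOf_mul_self, _root_.map_one],
      by rw [← _root_.map_mul, mul_invOf_self, _root_.map_one]⟩
  have hinv : (⅟(Matrix.scalar V y) : Matrix V V K) = Matrix.scalar V ⅟y := rfl
  rw [← Polynomial.eval_map, ← Matrix.charpoly_map _ ii, my_eval_charpoly,
    ← Matrix.det_submatrix_equiv_self (sumEquiv V), hairing_submatrix, Matrix.det_fromBlocks₂₂]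
  have hdet : (Matrix.scalar V y).det = y ^ Fintype.card V := by
    simp [Matrix.scalar_apply, Matrix.det_diagonal, Finset.prod_const, Finset.card_univ]
  have hmid : (Matrix.scalar V y - (G.adjMatrix ℤ).map ⇑ii) -
      (-1) * ⅟(Matrix.scalar V y) * (-1) = Matrix.scalar V (y - ⅟y) - (G.adjMatrix ℤ).map ⇑ii := by
    rw [hinv, neg_one_mul, mul_neg_one, neg_neg, _root_.map_sub]
    abel
  rw [hdet, hmid, ← my_eval_charpoly, Matrix.charpoly_map, Polynomial.eval_map]

end HairingBlocks

section Main1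

open Matrix SimpleGraph

variable {V : Type*} [Fintype V] [DecidableEq V] (G : SimpleGraph V) [DecidableRel G.Adj]

set_option synthInstance.maxHeartbeats 1000000 in
lemma main1 :
    (∀ i ≤ 2 * Fintype.card V,
        (((hairing G).adjMatrix ℤ).charpoly).coeff i =
          -(((hairing G).adjMatrix ℤ).charpoly).coeff (2 * Fintype.card V - i)) ↔
      ((G.adjMatrix ℤ).charpoly).comp (-X) = -((G.adjMatrix ℤ).charpoly) := by
  set n := Fintype.card V with hn
  set χ := ((hairing G).adjMatrix ℤ).charpoly with hχ
  set q := ((G.adjMatrix ℤ).charpoly) with hq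
  have hNdeg : χ.natDegree = 2 * n := by
    rw [hχ, Matrix.charpoly_natDegree_eq_dim]
    simp [Fintype.card_prod, mul_comm, hn]
  have step1 : (∀ i ≤ 2 * n, χ.coeff i = -χ.coeff (2 * n - i)) ↔
      reflect (2 * n) χ = -χ := by
    constructor
    · intro hpal
      ext k
      rw [Polynomial.coeff_reflect, Polynomial.coeff_neg]
      by_cases hk : k ≤ 2 * n
      · rw [Polynomial.revAt_le hk]
        have h1 := hpal k hk
        have h2 := hpal (2 * n - k) (by omega)
        rw [show 2 * n - (2 * n - k) = k by omega] at h2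
        omega
      · rw [Polynomial.revAt_eq_self_of_lt (by omega)]
        have : χ.coeff k = 0 := Polynomial.coeff_eq_zero_of_natDegree_lt (by omega)
        rw [this]; ring
    · intro hrefl k hk
      have h1 := congrArg (fun p => Polynomial.coeff p (2 * n - k)) hrefl
      simp only [Polynomial.coeff_reflect, Polynomial.coeff_neg] at h1
      rw [Polynomial.revAt_le (by omega), show 2 * n - (2 * n - k) = k by omega] at h1
      omega
  rw [step1]
  have step2 : reflect (2 * n) χ = -χ ↔
      eval₂ ii xx (reflect (2 * n) χ) = eval₂ ii xx (-χ) := by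
    constructor
    · intro h; rw [h]
    · intro h
      apply φ_inj
      rw [φ_eq_eval₂, φ_eq_eval₂]
      exact h
  rw [step2]
  have hrefl_eval : eval₂ ii xx (reflect (2 * n) χ) = xx ^ n * eval₂ ii (-zz) q := by
    have hrm := Polynomial.eval₂_reflect_mul_pow ii (⅟xx) (2 * n) χ (le_of_eq hNdeg)
    rw [invOf_invOf] at hrm
    have hpow : ((⅟xx : K)) ^ (2 * n) * xx ^ (2 * n) = 1 := by
      rw [← mul_pow, invOf_mul_self, one_pow]
    have e1 : eval₂ ii xx (reflect (2 * n) χ) = eval₂ ii (⅟xx) χ * xx ^ (2 * n) := by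
      calc eval₂ ii xx (reflect (2 * n) χ)
          = eval₂ ii xx (reflect (2 * n) χ) * ((⅟xx) ^ (2 * n) * xx ^ (2 * n)) := by
            rw [hpow, mul_one]
        _ = (eval₂ ii xx (reflect (2 * n) χ) * (⅟xx) ^ (2 * n)) * xx ^ (2 * n) := by ring
        _ = eval₂ ii (⅟xx) χ * xx ^ (2 * n) := by rw [hrm]
    rw [e1, Edet G (⅟xx)]
    rw [invOf_invOf]
    have : (⅟xx : K) - xx = -zz := by rw [zz]; ring
    rw [this]
    rw [pow_mul']
    calc (⅟xx) ^ n * eval₂ ii (-zz) q * (xx ^ n) ^ 2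
        = ((⅟xx) ^ n * xx ^ n) * (eval₂ ii (-zz) q * xx ^ n) := by ring
      _ = xx ^ n * eval₂ ii (-zz) q := by
          rw [← mul_pow, invOf_mul_self, one_pow, one_mul]; ring
  have hχ_eval : eval₂ ii xx (-χ) = -(xx ^ n * eval₂ ii zz q) := by
    rw [Polynomial.eval₂_neg, Edet G xx]
    rfl
  rw [hrefl_eval, hχ_eval]
  have hxn : (xx : K) ^ n ≠ 0 := pow_ne_zero _ xx_ne_zero
  constructor
  · intro h
    have h2 : eval₂ ii (-zz) q = -eval₂ ii zz q := by
      apply mul_left_cancel₀ hxn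
      rw [h]; ring
    have h3 : eval₂ ii zz (q.comp (-X) + q) = 0 := by
      rw [Polynomial.eval₂_add, Polynomial.eval₂_comp]
      have : eval₂ ii zz (-X : Polynomial ℤ) = -zz := by
        rw [Polynomial.eval₂_neg, Polynomial.eval₂_X]
      rw [this, h2]; ring
    have h4 := eval₂_zz_inj _ h3
    linear_combination (norm := ring_nf) h4
  · intro h
    have e : eval₂ ii zz (q.comp (-X)) = eval₂ ii (-zz) q := by
      rw [Polynomial.eval₂_comp]
      congr 1
      rw [Polynomial.eval₂_neg, Polynomial.eval₂_X]
    have : eval₂ ii (-zz) q = -eval₂ ii zz q := by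
      rw [← e, h, Polynomial.eval₂_neg]
    rw [this]; ring

end Main1

section Main2

open Matrix SimpleGraph

variable {V : Type*} [Fintype V] [DecidableEq V] (G : SimpleGraph V) [DecidableRel G.Adj]

lemma main2 :
    ((G.adjMatrix ℤ).charpoly).comp (-X) = -((G.adjMatrix ℤ).charpoly) ↔
      G.Colorable 2 ∧ Odd (Fintype.card V) := by
  set n := Fintype.card V with hn
  set A := G.adjMatrix ℤ with hA
  rw [my_charpoly_comp_neg]
  constructor
  · intro h
    have hodd : Odd n := by
      by_contra he
      have he' : Even n := Nat.not_odd_iff_even.mp he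
      rw [he'.neg_one_pow, one_mul] at h
      have h1 := congrArg (fun p => Polynomial.coeff p n) h
      have hm1 : ((-A).charpoly).coeff n = 1 := by
        have := (Matrix.charpoly_monic (-A)).coeff_natDegree
        rwa [Matrix.charpoly_natDegree_eq_dim] at this
      have hm2 : (A.charpoly).coeff n = 1 := by
        have := (Matrix.charpoly_monic A).coeff_natDegree
        rwa [Matrix.charpoly_natDegree_eq_dim] at this
      simp only [Polynomial.coeff_neg, hm1, hm2] at h1
      omega
    refine ⟨?_, hodd⟩
    rw [hodd.neg_one_pow, neg_one_mul] at h
    exact colorable_of_charpoly_neg (neg_inj.mp h)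
  · rintro ⟨hcol, hodd⟩
    rw [hodd.neg_one_pow, neg_one_mul, charpoly_neg_of_colorable hcol]

lemma hairing_colorable_iff : (hairing G).Colorable 2 ↔ G.Colorable 2 := by
  constructor
  · rintro ⟨c⟩
    exact ⟨SimpleGraph.Coloring.mk (fun v => c (v, false))
      (fun h => c.valid (Or.inl ⟨rfl, rfl, h⟩))⟩
  · intro hcol
    obtain ⟨c⟩ := hcol
    let cb : G.Coloring Bool := G.recolorOfEquiv finTwoEquiv c
    have : (hairing G).Coloring Bool := by
      refine SimpleGraph.Coloring.mk (fun p => xor (cb p.1) p.2) ?_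
      rintro ⟨u, bu⟩ ⟨v, bv⟩ (⟨h1, h2, hadj⟩ | ⟨h1, h2⟩)
      · dsimp only at h1 h2 ⊢
        subst h1; subst h2
        simpa using cb.valid hadj
      · dsimp only at h1 h2 ⊢
        subst h1
        cases bu <;> cases bv <;> simp_all
    have h2 := this.colorable
    simpa using h2

end Main2

section Assembly

open Matrix SimpleGraph

lemma charPoly_eq {V : Type*} [Finite V] (G : SimpleGraph V) [Fintype V] [DecidableEq V]
    [DecidableRel G.Adj] : charPoly G = (G.adjMatrix ℤ).charpoly := by
  unfold charPoly
  have h1 : Fintype.ofFinite V = ‹Fintype V› := Subsingleton.elim _ _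
  have h2 : Classical.decEq V = ‹DecidableEq V› := Subsingleton.elim _ _
  have h3 : Classical.decRel G.Adj = ‹DecidableRel G.Adj› := Subsingleton.elim _ _
  rw [h1, h2, h3]

end Assembly

/-- The hairing `H(G)` of a finite simple graph on `n` vertices is antipalindromic iff
`H(G)` is bipartite and `n` is odd. -/
theorem hairing_antipalindromic_iff {V : Type*} [Finite V] (G : SimpleGraph V) :
    IsAntipalindromic (hairing G) ↔ (hairing G).Colorable 2 ∧ Odd (Nat.card V) := by
  letI := Fintype.ofFinite V
  letI := Classical.decEq V
  letI := Classical.decRel G.Adj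
  have hcardV : Nat.card V = Fintype.card V := Nat.card_eq_fintype_card
  have hcardVB : Nat.card (V × Bool) = 2 * Fintype.card V := by
    rw [Nat.card_eq_fintype_card, Fintype.card_prod, Fintype.card_bool]
    ring
  have hCP : charPoly (hairing G) = ((hairing G).adjMatrix ℤ).charpoly := charPoly_eq _
  unfold IsAntipalindromic
  rw [hCP, hcardVB, hcardV]
  rw [main1 G, main2 G, hairing_colorable_iff G]
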